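/- Compensated coupling (sample-path identity): For every arrival sequence ω ∈ Θ^T, every initial state S^T, and every online policy with resulting trajectory (S^t) and actions (A^t), the regret satisfies Reg[ω] = Σ_{t=1}^{T} R_l(t, A^t, S^t)[ω] · 1{ω ∈ Q(t, A^t, S^t)}. -/
import Mathlib


open Finset

/-- Offline (prophet) value function: `voff Tr Re ω t s` is the optimal value with `t` periods
to go, in state `s`, on the arrival sample path `ω` (where `ω t` is the arrival with
time-to-go `t`), defined by the deterministic Bellman recursion. -/
noncomputable def voff {S A Θ : Type*} [Fintype A] [Nonempty A]
    (Tr : A → S → Θ → S) (Re : A → S → Θ → ℝ) (ω : ℕ → Θ) : ℕ → S → ℝ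
  | 0, _ => 0
  | (t + 1), s => ⨆ a : A, (Re a s (ω (t + 1)) + voff Tr Re ω t (Tr a s (ω (t + 1))))

/-- Marginal compensation of action `a` at time-to-go `t` in state `s` on sample path `ω`. -/
noncomputable def Rl {S A Θ : Type*} [Fintype A] [Nonempty A]
    (Tr : A → S → Θ → S) (Re : A → S → Θ → ℝ) (ω : ℕ → Θ) (t : ℕ) (a : A) (s : S) : ℝ :=
  voff Tr Re ω t s - (Re a s (ω t) + voff Tr Re ω (t - 1) (Tr a s (ω t)))

lemma Rl_nonneg {S A Θ : Type*} [Fintype A] [Nonempty A]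
    (Tr : A → S → Θ → S) (Re : A → S → Θ → ℝ) (ω : ℕ → Θ) (t : ℕ) (ht : 1 ≤ t)
    (a : A) (s : S) : 0 ≤ Rl Tr Re ω t a s := by
  obtain ⟨n, rfl⟩ : ∃ n, t = n + 1 := ⟨t - 1, (Nat.succ_pred_eq_of_pos ht).symm⟩
  have h : Re a s (ω (n + 1)) + voff Tr Re ω n (Tr a s (ω (n + 1)))
      ≤ ⨆ b : A, (Re b s (ω (n + 1)) + voff Tr Re ω n (Tr b s (ω (n + 1)))) :=
    le_ciSup (Set.Finite.bddAbove (Set.finite_range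
      (fun b : A => Re b s (ω (n + 1)) + voff Tr Re ω n (Tr b s (ω (n + 1)))))) a
  simp only [Rl, voff, Nat.add_sub_cancel]
  linarith

open scoped Classical in
/-- **Compensated coupling (sample-path identity)**: for every arrival sequence `ω`, every
online trajectory `St` with actions `Act` (satisfying the state recursion
`S^{t-1} = Tr(A^t, S^t, θ^t)`), the regret
`v_off(T, S^T)[ω] − Σ_{t=1}^T Re(A^t, S^t, θ^t)` equals
`Σ_{t=1}^T R_l(t, A^t, S^t)[ω] · 1{ω ∈ Q(t, A^t, S^t)}`, where
`Q(t,a,s) = {ω : R_l(t,a,s)[ω] > 0}` is the disagreement event. -/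
theorem compensated_coupling_sample_path
    {S A Θ : Type*} [Fintype A] [Nonempty A]
    (T : ℕ) (Tr : A → S → Θ → S) (Re : A → S → Θ → ℝ)
    (ω : ℕ → Θ) (Act : ℕ → A) (St : ℕ → S)
    (hSt : ∀ t, 1 ≤ t → t ≤ T → St (t - 1) = Tr (Act t) (St t) (ω t)) :
    voff Tr Re ω T (St T) - ∑ t ∈ Finset.Icc 1 T, Re (Act t) (St t) (ω t)
      = ∑ t ∈ Finset.Icc 1 T,
          Rl Tr Re ω t (Act t) (St t) *
            (if 0 < Rl Tr Re ω t (Act t) (St t) then 1 else 0) := by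
  classical
  have key : ∀ t ∈ Finset.Icc 1 T,
      Rl Tr Re ω t (Act t) (St t) *
        (if 0 < Rl Tr Re ω t (Act t) (St t) then 1 else 0)
      = voff Tr Re ω t (St t) - Re (Act t) (St t) (ω t) - voff Tr Re ω (t - 1) (St (t - 1)) := by
    intro t ht
    rw [Finset.mem_Icc] at ht
    have hR := Rl_nonneg Tr Re ω t ht.1 (Act t) (St t)
    have hs : Rl Tr Re ω t (Act t) (St t) *
        (if 0 < Rl Tr Re ω t (Act t) (St t) then 1 else 0) = Rl Tr Re ω t (Act t) (St t) := by
      split_ifs with h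
      · ring
      · have : Rl Tr Re ω t (Act t) (St t) = 0 := le_antisymm (not_lt.mp h) hR
        simp [this]
    rw [hs, Rl, hSt t ht.1 ht.2]
    ring
  rw [Finset.sum_congr rfl key]
  induction T with
  | zero => simp [voff]
  | succ n ih =>
    have hSt' : ∀ t, 1 ≤ t → t ≤ n → St (t - 1) = Tr (Act t) (St t) (ω t) :=
      fun t h1 h2 => hSt t h1 (h2.trans (Nat.le_succ n))
    have h0 : (1:ℕ) ≤ n + 1 := Nat.succ_le_succ (Nat.zero_le n)
    rw [Finset.sum_Icc_succ_top h0, Finset.sum_Icc_succ_top h0,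
      ← ih hSt' (fun t ht => key t (Finset.mem_Icc.mpr
        ⟨(Finset.mem_Icc.mp ht).1, ((Finset.mem_Icc.mp ht).2.trans (Nat.le_succ n))⟩))]
    simp only [Nat.add_sub_cancel]
    ring
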